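/- Let F, G, H be finite groups and let I ≤ F × G, J ≤ G × H be subgroups with p₂(I) = p₁(J). Let K ≤ F × H be a subgroup with K ≤ I * J, p₁(K) = p₁(I * J) and p₂(K) = p₂(I * J). Let R_K^{I,J} be the finite poset of pairs (U, V) with U ≤ I, V ≤ J, K ≤ U * V and p₂(U) = p₁(V), ordered componentwise by inclusion. Then τ_K^{I,J} = Σ_{(U,V) ∈ R_K^{I,J}} möb_{R_K^{I,J}}((U, V), (I, J)) · σ(U, V), where möb_{R_K^{I,J}} denotes the Möbius function of the poset R_K^{I,J}. -/

import Mathlib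

open scoped Classical

namespace SubgroupCat

variable {R S T : Type*}

/-- The star product of subgroups `U ≤ R × S` and `V ≤ S × T`:
`U * V = {(r, t) | ∃ s, (r, s) ∈ U ∧ (s, t) ∈ V}`. -/
def starProd [Group R] [Group S] [Group T] (U : Subgroup (R × S)) (V : Subgroup (S × T)) :
    Subgroup (R × T) where
  carrier := {rt | ∃ s : S, (rt.1, s) ∈ U ∧ (s, rt.2) ∈ V}
  one_mem' := ⟨1, one_mem U, one_mem V⟩
  mul_mem' := by
    rintro a b ⟨s, hU, hV⟩ ⟨s', hU', hV'⟩
    exact ⟨s * s', mul_mem hU hU', mul_mem hV hV'⟩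
  inv_mem' := by
    rintro a ⟨s, hU, hV⟩
    exact ⟨s⁻¹, inv_mem hU, inv_mem hV⟩

@[simp] lemma mem_starProd [Group R] [Group S] [Group T] {U : Subgroup (R × S)}
    {V : Subgroup (S × T)} {p : R × T} :
    p ∈ starProd U V ↔ ∃ s : S, (p.1, s) ∈ U ∧ (s, p.2) ∈ V := Iff.rfl

/-- First projection `p₁(U) = {r | ∃ s, (r, s) ∈ U}`. -/
def p1 [Group R] [Group S] (U : Subgroup (R × S)) : Subgroup R :=
  U.map (MonoidHom.fst R S)

/-- Second projection `p₂(U) = {s | ∃ r, (r, s) ∈ U}`. -/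
def p2 [Group R] [Group S] (U : Subgroup (R × S)) : Subgroup S :=
  U.map (MonoidHom.snd R S)

/-- First kernel `k₁(U) = {r | (r, 1) ∈ U}`. -/
def k1 [Group R] [Group S] (U : Subgroup (R × S)) : Subgroup R :=
  U.comap (MonoidHom.inl R S)

/-- Second kernel `k₂(U) = {s | (1, s) ∈ U}`. -/
def k2 [Group R] [Group S] (U : Subgroup (R × S)) : Subgroup S :=
  U.comap (MonoidHom.inr R S)

/-- The Möbius function of a finite poset: `pmoeb u i` is `möb(u, i)`. -/
noncomputable def pmoeb {P : Type*} [PartialOrder P] [Finite P] (u i : P) : ℤ :=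
  if u = i then 1
  else if u < i then
    - ∑ v ∈ ({v : P | u < v ∧ v ≤ i}.toFinite.toFinset).attach, pmoeb v.1 i
  else 0
termination_by Nat.card {w : P // u ≤ w}
decreasing_by
  · have hv := v.2
    rw [Set.Finite.mem_toFinset] at hv
    have hlt : u < (v : P) := hv.1
    have hsub : {w : P | (v : P) ≤ w} ⊂ {w : P | u ≤ w} :=
      ⟨fun w hw => le_trans hlt.le hw,
       fun hcon => absurd (hcon (le_refl u)) (by simpa using not_le_of_gt hlt)⟩
    rw [show {w : P // (v : P) ≤ w} = ↑{w : P | (v : P) ≤ w} from rfl,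
      show {w : P // u ≤ w} = ↑{w : P | u ≤ w} from rfl,
      Nat.card_coe_set_eq, Nat.card_coe_set_eq]
    exact Set.ncard_lt_ncard hsub (Set.toFinite _)

/-- `möb(U, I)` for subgroups of a finite group: the Möbius function of the
subgroup lattice. -/
noncomputable def moeb {G : Type*} [Group G] [Finite G] (U I : Subgroup G) : ℤ :=
  pmoeb U I

/-- `ℓ(A) = ℓ(|A|)` for a finite group `A`, where `ℓ : ℕ⁺ →* 𝕂ˣ`. -/
noncomputable def ellG {𝕂 : Type*} [Field 𝕂] (ℓ : ℕ+ →* 𝕂ˣ) (A : Type*) [Group A] [Finite A] :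
    𝕂 :=
  (ℓ ⟨Nat.card A, Nat.card_pos⟩ : 𝕂ˣ)

/-- The cocycle `σ(U, V) = ℓ(k₂(U) ∩ k₁(V))`. -/
noncomputable def sigmaC {𝕂 : Type*} [Field 𝕂] (ℓ : ℕ+ →* 𝕂ˣ)
    {F G H : Type*} [Group F] [Group G] [Group H] [Finite G]
    (U : Subgroup (F × G)) (V : Subgroup (G × H)) : 𝕂 :=
  ellG ℓ ↑(k2 U ⊓ k1 V)

/-- `τ_K^{I,J} = ∑ möb(U,I) · möb(V,J) · σ(U,V)`, the sum being over all pairs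
of subgroups `(U, V)` with `U ≤ I`, `V ≤ J` and `K ≤ U * V`. -/
noncomputable def tau {𝕂 : Type*} [Field 𝕂] (ℓ : ℕ+ →* 𝕂ˣ)
    {F G H : Type*} [Group F] [Group G] [Group H] [Finite F] [Finite G] [Finite H]
    (I : Subgroup (F × G)) (J : Subgroup (G × H)) (K : Subgroup (F × H)) : 𝕂 :=
  ∑ᶠ q ∈ {q : Subgroup (F × G) × Subgroup (G × H) |
      q.1 ≤ I ∧ q.2 ≤ J ∧ K ≤ starProd q.1 q.2},
    (moeb q.1 I : 𝕂) * (moeb q.2 J : 𝕂) * sigmaC ℓ q.1 q.2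

/-- The poset `R_K^{I,J}` of pairs `(U, V)` with `U ≤ I`, `V ≤ J`, `K ≤ U * V` and
`p₂(U) = p₁(V)`, ordered componentwise by inclusion. -/
def Rposet {F G H : Type*} [Group F] [Group G] [Group H]
    (I : Subgroup (F × G)) (J : Subgroup (G × H)) (K : Subgroup (F × H)) :
    Set (Subgroup (F × G) × Subgroup (G × H)) :=
  {q | q.1 ≤ I ∧ q.2 ≤ J ∧ K ≤ starProd q.1 q.2 ∧ p2 q.1 = p1 q.2}

section PmoebSec
variable {P : Type*} [PartialOrder P] [Finite P]
lemma pmoeb_self (i : P) : pmoeb i i = 1 := by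
  rw [pmoeb]; simp

lemma pmoeb_of_not_le {u i : P} (h : ¬ u ≤ i) : pmoeb u i = 0 := by
  rw [pmoeb]
  rw [if_neg (by rintro rfl; exact h le_rfl), if_neg (fun hlt => h hlt.le)]

lemma pmoeb_sum_eq {u i : P} (h : u ≤ i) :
    ∑ v ∈ ({v : P | u ≤ v ∧ v ≤ i}).toFinite.toFinset, pmoeb v i =
      if u = i then 1 else 0 := by
  rcases eq_or_lt_of_le h with rfl | hlt
  · rw [if_pos rfl]
    have hset : ({v : P | u ≤ v ∧ v ≤ u}).toFinite.toFinset = {u} := by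
      ext v; simp [le_antisymm_iff, and_comm]
    rw [hset, Finset.sum_singleton, pmoeb_self]
  · rw [if_neg hlt.ne]
    have hsplit : ({v : P | u ≤ v ∧ v ≤ i}).toFinite.toFinset =
        insert u (({v : P | u < v ∧ v ≤ i}).toFinite.toFinset) := by
      ext v
      simp only [Set.Finite.mem_toFinset, Set.mem_setOf_eq, Finset.mem_insert]
      constructor
      · rintro ⟨h1, h2⟩
        rcases eq_or_lt_of_le h1 with rfl | h1'
        · exact Or.inl rfl
        · exact Or.inr ⟨h1', h2⟩
      · rintro (rfl | ⟨h1, h2⟩)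
        · exact ⟨le_rfl, h⟩
        · exact ⟨h1.le, h2⟩
    have hnotmem : u ∉ ({v : P | u < v ∧ v ≤ i}).toFinite.toFinset := by
      simp
    rw [hsplit, Finset.sum_insert hnotmem]
    have hrec : pmoeb u i =
        - ∑ v ∈ (({v : P | u < v ∧ v ≤ i}).toFinite.toFinset).attach, pmoeb v.1 i := by
      rw [pmoeb, if_neg hlt.ne, if_pos hlt]
    rw [hrec, ← Finset.sum_attach (({v : P | u < v ∧ v ≤ i}).toFinite.toFinset)
      (fun v => pmoeb v i)]
    ring

lemma moeb_unique_aux (i : P) (A : P → ℤ)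
    (hA : ∀ u, u ≤ i →
      ∑ v ∈ ({v : P | u ≤ v ∧ v ≤ i}).toFinite.toFinset, A v = if u = i then 1 else 0) :
    ∀ n : ℕ, ∀ u, u ≤ i → ({v : P | u < v ∧ v ≤ i}).ncard ≤ n → A u = pmoeb u i := by
  intro n
  induction n with
  | zero =>
    intro u hu hcard
    have hempty : {v : P | u < v ∧ v ≤ i} = ∅ :=
      (Set.ncard_eq_zero (Set.toFinite _)).mp (Nat.le_zero.mp hcard)
    have hsplit : ({v : P | u ≤ v ∧ v ≤ i}).toFinite.toFinset =
        insert u (({v : P | u < v ∧ v ≤ i}).toFinite.toFinset) := by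
      ext v
      simp only [Set.Finite.mem_toFinset, Set.mem_setOf_eq, Finset.mem_insert]
      constructor
      · rintro ⟨h1, h2⟩
        rcases eq_or_lt_of_le h1 with rfl | h1'
        · exact Or.inl rfl
        · exact Or.inr ⟨h1', h2⟩
      · rintro (rfl | ⟨h1, h2⟩)
        · exact ⟨le_rfl, hu⟩
        · exact ⟨h1.le, h2⟩
    have h1 := hA u hu
    have h2 := pmoeb_sum_eq hu
    rw [hsplit] at h1 h2
    have hemp : ({v : P | u < v ∧ v ≤ i}).toFinite.toFinset = ∅ := by
      simp [hempty]
    rw [hemp] at h1 h2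
    simp only [Finset.sum_insert (Finset.notMem_empty u), Finset.sum_empty, add_zero] at h1 h2
    rw [h1, h2]
  | succ n ih =>
    intro u hu hcard
    have hsplit : ({v : P | u ≤ v ∧ v ≤ i}).toFinite.toFinset =
        insert u (({v : P | u < v ∧ v ≤ i}).toFinite.toFinset) := by
      ext v
      simp only [Set.Finite.mem_toFinset, Set.mem_setOf_eq, Finset.mem_insert]
      constructor
      · rintro ⟨h1, h2⟩
        rcases eq_or_lt_of_le h1 with rfl | h1'
        · exact Or.inl rfl
        · exact Or.inr ⟨h1', h2⟩
      · rintro (rfl | ⟨h1, h2⟩)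
        · exact ⟨le_rfl, hu⟩
        · exact ⟨h1.le, h2⟩
    have hnotmem : u ∉ ({v : P | u < v ∧ v ≤ i}).toFinite.toFinset := by simp
    have h1 := hA u hu
    have h2 := pmoeb_sum_eq hu
    rw [hsplit, Finset.sum_insert hnotmem] at h1 h2
    have hsame : ∑ v ∈ ({v : P | u < v ∧ v ≤ i}).toFinite.toFinset, A v =
        ∑ v ∈ ({v : P | u < v ∧ v ≤ i}).toFinite.toFinset, pmoeb v i := by
      apply Finset.sum_congr rfl
      intro v hv
      rw [Set.Finite.mem_toFinset] at hv
      apply ih v hv.2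
      have hsub : {w : P | v < w ∧ w ≤ i} ⊂ {w : P | u < w ∧ w ≤ i} := by
        constructor
        · intro w hw
          exact ⟨hv.1.trans hw.1, hw.2⟩
        · intro hcon
          exact absurd (hcon hv).1 (lt_irrefl v)
      have := Set.ncard_lt_ncard hsub (Set.toFinite _)
      omega
    omega

lemma moeb_unique (i : P) (A : P → ℤ)
    (hA : ∀ u, u ≤ i →
      ∑ v ∈ ({v : P | u ≤ v ∧ v ≤ i}).toFinite.toFinset, A v = if u = i then 1 else 0) :
    ∀ u, u ≤ i → A u = pmoeb u i :=
  fun u hu => moeb_unique_aux i A hA _ u hu le_rfl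

end PmoebSec


section CmapSec
variable {F G H : Type*} [Group F] [Group G] [Group H]

/-- The kernel operator sending `(U, V)` to `(U ∩ (F × p₁V), V ∩ (p₂U × H))`. -/
def cmap (q : Subgroup (F × G) × Subgroup (G × H)) : Subgroup (F × G) × Subgroup (G × H) :=
  (q.1 ⊓ Subgroup.prod ⊤ (p1 q.2), q.2 ⊓ Subgroup.prod (p2 q.1) ⊤)

lemma mem_p1 {V : Subgroup (G × H)} {g : G} : g ∈ p1 V ↔ ∃ h : H, (g, h) ∈ V := by
  constructor
  · rintro ⟨⟨a, b⟩, hab, rfl⟩; exact ⟨b, hab⟩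
  · rintro ⟨h, hh⟩; exact ⟨(g, h), hh, rfl⟩

lemma mem_p2 {U : Subgroup (F × G)} {g : G} : g ∈ p2 U ↔ ∃ f : F, (f, g) ∈ U := by
  constructor
  · rintro ⟨⟨a, b⟩, hab, rfl⟩; exact ⟨a, hab⟩
  · rintro ⟨f, hf⟩; exact ⟨(f, g), hf, rfl⟩

lemma mem_k1 {V : Subgroup (G × H)} {g : G} : g ∈ k1 V ↔ (g, 1) ∈ V := Iff.rfl

lemma mem_k2 {U : Subgroup (F × G)} {g : G} : g ∈ k2 U ↔ (1, g) ∈ U := Iff.rfl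

lemma mem_cmap_fst {q : Subgroup (F × G) × Subgroup (G × H)} {x : F × G} :
    x ∈ (cmap q).1 ↔ x ∈ q.1 ∧ x.2 ∈ p1 q.2 := by
  simp [cmap, Subgroup.mem_inf, Subgroup.mem_prod]

lemma mem_cmap_snd {q : Subgroup (F × G) × Subgroup (G × H)} {x : G × H} :
    x ∈ (cmap q).2 ↔ x ∈ q.2 ∧ x.1 ∈ p2 q.1 := by
  simp [cmap, Subgroup.mem_inf, Subgroup.mem_prod]

lemma cmap_le (q : Subgroup (F × G) × Subgroup (G × H)) : cmap q ≤ q :=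
  ⟨inf_le_left, inf_le_left⟩

lemma cmap_mono : Monotone (cmap (F := F) (G := G) (H := H)) := by
  intro q r hqr
  constructor
  · exact inf_le_inf hqr.1 (Subgroup.prod_mono le_rfl (Subgroup.map_mono hqr.2))
  · exact inf_le_inf hqr.2 (Subgroup.prod_mono (Subgroup.map_mono hqr.1) le_rfl)

lemma p2_cmap_fst (q : Subgroup (F × G) × Subgroup (G × H)) :
    p2 (cmap q).1 = p2 q.1 ⊓ p1 q.2 := by
  ext g
  simp only [mem_p2, mem_cmap_fst, Subgroup.mem_inf]
  constructor
  · rintro ⟨f, hf, hg⟩; exact ⟨⟨f, hf⟩, hg⟩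
  · rintro ⟨⟨f, hf⟩, hg⟩; exact ⟨f, hf, hg⟩

lemma p1_cmap_snd (q : Subgroup (F × G) × Subgroup (G × H)) :
    p1 (cmap q).2 = p2 q.1 ⊓ p1 q.2 := by
  ext g
  simp only [mem_p1, mem_cmap_snd, Subgroup.mem_inf]
  constructor
  · rintro ⟨h, hh, hg⟩; exact ⟨hg, h, hh⟩
  · rintro ⟨hg, h, hh⟩; exact ⟨h, hh, hg⟩

lemma cmap_compat (q : Subgroup (F × G) × Subgroup (G × H)) :
    p2 (cmap q).1 = p1 (cmap q).2 := by
  rw [p2_cmap_fst, p1_cmap_snd]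

lemma cmap_eq_self {q : Subgroup (F × G) × Subgroup (G × H)} (h : p2 q.1 = p1 q.2) :
    cmap q = q := by
  have h1 : (cmap q).1 = q.1 := by
    ext x
    rw [mem_cmap_fst, ← h, and_iff_left_iff_imp]
    intro hx
    exact mem_p2.mpr ⟨x.1, hx⟩
  have h2 : (cmap q).2 = q.2 := by
    ext x
    rw [mem_cmap_snd, h, and_iff_left_iff_imp]
    intro hx
    exact mem_p1.mpr ⟨x.2, hx⟩
  exact Prod.ext h1 h2

lemma starProd_cmap (q : Subgroup (F × G) × Subgroup (G × H)) :
    starProd (cmap q).1 (cmap q).2 = starProd q.1 q.2 := by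
  ext x
  simp only [mem_starProd, mem_cmap_fst, mem_cmap_snd]
  constructor
  · rintro ⟨s, ⟨h1, _⟩, h2, _⟩; exact ⟨s, h1, h2⟩
  · rintro ⟨s, h1, h2⟩
    exact ⟨s, ⟨h1, mem_p1.mpr ⟨x.2, h2⟩⟩, h2, mem_p2.mpr ⟨x.1, h1⟩⟩

lemma kk_cmap (q : Subgroup (F × G) × Subgroup (G × H)) :
    k2 (cmap q).1 ⊓ k1 (cmap q).2 = k2 q.1 ⊓ k1 q.2 := by
  ext g
  simp only [Subgroup.mem_inf, mem_k1, mem_k2, mem_cmap_fst, mem_cmap_snd]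
  constructor
  · rintro ⟨⟨h1, _⟩, h2, _⟩; exact ⟨h1, h2⟩
  · rintro ⟨h1, h2⟩
    exact ⟨⟨h1, mem_p1.mpr ⟨(1 : H), h2⟩⟩, h2, mem_p2.mpr ⟨(1 : F), h1⟩⟩

lemma le_cmap_iff {r q : Subgroup (F × G) × Subgroup (G × H)} (hr : p2 r.1 = p1 r.2) :
    r ≤ cmap q ↔ r ≤ q := by
  constructor
  · intro h; exact le_trans h (cmap_le q)
  · intro h
    calc r = cmap r := (cmap_eq_self hr).symm
    _ ≤ cmap q := cmap_mono h

end CmapSec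


lemma starProd_mono {F G H : Type*} [Group F] [Group G] [Group H]
    {U U' : Subgroup (F × G)} {V V' : Subgroup (G × H)} (hU : U ≤ U') (hV : V ≤ V') :
    starProd U V ≤ starProd U' V' := by
  rintro x ⟨s, ha, hb⟩
  exact ⟨s, hU ha, hV hb⟩

lemma sigma_cmap {𝕂 : Type*} [Field 𝕂] (ℓ : ℕ+ →* 𝕂ˣ)
    {F G H : Type*} [Group F] [Group G] [Group H] [Finite G]
    (p : Subgroup (F × G) × Subgroup (G × H)) :
    sigmaC ℓ (cmap p).1 (cmap p).2 = sigmaC ℓ p.1 p.2 := by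
  simp only [sigmaC]
  exact congrArg (fun S : Subgroup G => ellG ℓ ↥S) (kk_cmap p)


/-- **Boltje–Danz.** If `(I, J)` is strongly compatible and `K` is an adequate subgroup
of `I * J`, then `τ_K^{I,J} = ∑_{(U,V) ∈ R_K^{I,J}} möb_{R_K^{I,J}}((U,V),(I,J)) σ(U,V)`. -/
theorem tau_eq_sum_Rposet {𝕂 : Type*} [Field 𝕂] [CharZero 𝕂] (ℓ : ℕ+ →* 𝕂ˣ)
    (F G H : Type*) [Group F] [Group G] [Group H] [Finite F] [Finite G] [Finite H]
    (I : Subgroup (F × G)) (J : Subgroup (G × H)) (K : Subgroup (F × H))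
    (hcomp : p2 I = p1 J) (hK : K ≤ starProd I J)
    (h1 : p1 K = p1 (starProd I J)) (h2 : p2 K = p2 (starProd I J)) :
    tau ℓ I J K =
      ∑ᶠ q : Rposet I J K,
        (pmoeb q (⟨(I, J), le_refl I, le_refl J, hK, hcomp⟩ : Rposet I J K) : 𝕂) *
          sigmaC ℓ q.1.1 q.1.2 := by
  classical
  letI : Fintype ↥(Rposet I J K) := Fintype.ofFinite _
  rw [tau]
  set i : ↥(Rposet I J K) := ⟨(I, J), le_refl I, le_refl J, hK, hcomp⟩ with hi
  set Ss : Set (Subgroup (F × G) × Subgroup (G × H)) :=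
    {q | q.1 ≤ I ∧ q.2 ≤ J ∧ K ≤ starProd q.1 q.2} with hSs
  set sS : Finset (Subgroup (F × G) × Subgroup (G × H)) := Ss.toFinite.toFinset with hsS
  set g : Subgroup (F × G) × Subgroup (G × H) → ↥(Rposet I J K) :=
    fun p => if h : cmap p ∈ Rposet I J K then ⟨cmap p, h⟩ else i with hg
  have hmemS : ∀ p, p ∈ sS ↔ (p.1 ≤ I ∧ p.2 ≤ J ∧ K ≤ starProd p.1 p.2) := by
    intro p; rw [hsS, Set.Finite.mem_toFinset]; exact Iff.rfl
  have hcmapR : ∀ p ∈ sS, cmap p ∈ Rposet I J K := by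
    intro p hp
    rw [hmemS] at hp
    exact ⟨le_trans (cmap_le p).1 hp.1, le_trans (cmap_le p).2 hp.2.1,
      by rw [starProd_cmap]; exact hp.2.2, cmap_compat p⟩
  have hgval : ∀ p ∈ sS, (g p : Subgroup (F × G) × Subgroup (G × H)) = cmap p := by
    intro p hp
    rw [hg]; simp only [dif_pos (hcmapR p hp)]
  have hle_i : ∀ v : ↥(Rposet I J K), v ≤ i := by
    intro v
    have hv := v.2
    have : (v : Subgroup (F × G) × Subgroup (G × H)) ≤ (I, J) := ⟨hv.1, hv.2.1⟩
    exact Subtype.coe_le_coe.mp this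
  set A : ↥(Rposet I J K) → ℤ :=
    fun q => ∑ p ∈ sS.filter (fun p => g p = q), moeb p.1 I * moeb p.2 J with hA
  have hkey : ∀ q : ↥(Rposet I J K), A q = pmoeb q i := by
    refine fun q => moeb_unique i A ?_ q (hle_i q)
    intro q hq
    have hint : ({v : ↥(Rposet I J K) | q ≤ v ∧ v ≤ i}).toFinite.toFinset =
        Finset.univ.filter (fun v => q ≤ v) := by
      ext v
      simp only [Set.Finite.mem_toFinset, Set.mem_setOf_eq, Finset.mem_filter,
        Finset.mem_univ, true_and, and_iff_left_iff_imp]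
      exact fun _ => hle_i v
    rw [hint]
    have hq2 : p2 (q : Subgroup (F × G) × Subgroup (G × H)).1 =
        p1 (q : Subgroup (F × G) × Subgroup (G × H)).2 := q.2.2.2.2
    have hfib : ∑ v ∈ Finset.univ.filter (fun v => q ≤ v), A v =
        ∑ p ∈ sS.filter (fun p => (q : Subgroup (F × G) × Subgroup (G × H)) ≤ cmap p),
          moeb p.1 I * moeb p.2 J := by
      rw [← Finset.sum_fiberwise_of_maps_to (g := g)
        (t := Finset.univ.filter (fun v => q ≤ v))
        (s := sS.filter (fun p => (q : Subgroup (F × G) × Subgroup (G × H)) ≤ cmap p))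
        ?_ (fun p => moeb p.1 I * moeb p.2 J)]
      · apply Finset.sum_congr rfl
        intro v hv
        rw [Finset.mem_filter] at hv
        rw [hA, Finset.filter_filter]
        apply Finset.sum_congr _ (fun p _ => rfl)
        apply Finset.filter_congr
        intro p hp
        constructor
        · intro hgp
          refine ⟨?_, hgp⟩
          rw [← hgval p hp, hgp]
          exact Subtype.coe_le_coe.mpr hv.2
        · exact And.right
      · intro p hp
        rw [Finset.mem_filter] at hp
        rw [Finset.mem_filter]
        refine ⟨Finset.mem_univ _, ?_⟩
        apply Subtype.coe_le_coe.mp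
        rw [hgval p hp.1]
        exact hp.2
    rw [hfib]
    have hfilter : sS.filter (fun p => (q : Subgroup (F × G) × Subgroup (G × H)) ≤ cmap p) =
        ({U : Subgroup (F × G) | (q : Subgroup (F × G) × Subgroup (G × H)).1 ≤ U ∧
            U ≤ I}).toFinite.toFinset ×ˢ
        ({V : Subgroup (G × H) | (q : Subgroup (F × G) × Subgroup (G × H)).2 ≤ V ∧
            V ≤ J}).toFinite.toFinset := by
      ext p
      rw [Finset.mem_filter, Finset.mem_product, hmemS,
        le_cmap_iff hq2, Set.Finite.mem_toFinset, Set.Finite.mem_toFinset]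
      simp only [Set.mem_setOf_eq]
      constructor
      · rintro ⟨⟨hpI, hpJ, _⟩, hqp⟩
        exact ⟨⟨hqp.1, hpI⟩, hqp.2, hpJ⟩
      · rintro ⟨⟨hqa, hpI⟩, hqb, hpJ⟩
        exact ⟨⟨hpI, hpJ, le_trans q.2.2.2.1 (starProd_mono hqa hqb)⟩, hqa, hqb⟩
    rw [hfilter, Finset.sum_product]
    have hrowsum : ∀ U : Subgroup (F × G), ∑ V ∈ ({V : Subgroup (G × H) |
          (q : Subgroup (F × G) × Subgroup (G × H)).2 ≤ V ∧ V ≤ J}).toFinite.toFinset,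
        moeb U I * moeb V J = moeb U I *
          (if (q : Subgroup (F × G) × Subgroup (G × H)).2 = J then 1 else 0) := by
      intro U
      rw [← Finset.mul_sum]
      congr 1
      exact pmoeb_sum_eq q.2.2.1
    simp only [hrowsum]
    rw [← Finset.sum_mul]
    rw [show ∑ U ∈ ({U : Subgroup (F × G) |
        (q : Subgroup (F × G) × Subgroup (G × H)).1 ≤ U ∧ U ≤ I}).toFinite.toFinset,
        moeb U I = if (q : Subgroup (F × G) × Subgroup (G × H)).1 = I then 1 else 0
      from pmoeb_sum_eq q.2.1]
    have heq : q = i ↔ ((q : Subgroup (F × G) × Subgroup (G × H)).1 = I ∧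
        (q : Subgroup (F × G) × Subgroup (G × H)).2 = J) := by
      rw [Subtype.ext_iff, Prod.ext_iff]
    by_cases ha : (q : Subgroup (F × G) × Subgroup (G × H)).1 = I <;>
      by_cases hb : (q : Subgroup (F × G) × Subgroup (G × H)).2 = J <;>
      simp [ha, hb, heq]
  rw [show Ss = ↑sS from (Set.Finite.coe_toFinset _).symm,
    finsum_mem_coe_finset, finsum_eq_sum_of_fintype]
  calc ∑ p ∈ sS, (moeb p.1 I : 𝕂) * (moeb p.2 J : 𝕂) * sigmaC ℓ p.1 p.2
      = ∑ p ∈ sS, (moeb p.1 I : 𝕂) * (moeb p.2 J : 𝕂) *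
          sigmaC ℓ (g p : Subgroup (F × G) × Subgroup (G × H)).1
            (g p : Subgroup (F × G) × Subgroup (G × H)).2 := by
        apply Finset.sum_congr rfl
        intro p hp
        rw [hgval p hp, sigma_cmap]
    _ = ∑ v : ↥(Rposet I J K), ∑ p ∈ sS.filter (fun p => g p = v),
          (moeb p.1 I : 𝕂) * (moeb p.2 J : 𝕂) *
          sigmaC ℓ (g p : Subgroup (F × G) × Subgroup (G × H)).1
            (g p : Subgroup (F × G) × Subgroup (G × H)).2 := by
        rw [Finset.sum_fiberwise_of_maps_to (fun p _ => Finset.mem_univ (g p))]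
    _ = ∑ v : ↥(Rposet I J K), (A v : 𝕂) * sigmaC ℓ
          (v : Subgroup (F × G) × Subgroup (G × H)).1
          (v : Subgroup (F × G) × Subgroup (G × H)).2 := by
        apply Finset.sum_congr rfl
        intro v _
        rw [hA, Int.cast_sum, Finset.sum_mul]
        apply Finset.sum_congr rfl
        intro p hp
        rw [Finset.mem_filter] at hp
        rw [hp.2]
        push_cast
        ring
    _ = ∑ v : ↥(Rposet I J K), (pmoeb v i : 𝕂) * sigmaC ℓ
          (v : Subgroup (F × G) × Subgroup (G × H)).1
          (v : Subgroup (F × G) × Subgroup (G × H)).2 := by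
        apply Finset.sum_congr rfl
        intro v _
        rw [hkey v]

end SubgroupCat
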